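/- (Proposition 3, CDF form) Let f be a ReLU network as defined and let the input x be a Gaussian-mixture random vector with law μ = Σ_{k=1}^K α_k N(μ_k, Σ_k). For each binary vector ζ' ∈ {0,1}^N set μ̃_{k,ζ'} = C̄^{(L)} μ_k + d̄^{(L)} and Σ̃_{k,ζ'} = C̄^{(L)} Σ_k (C̄^{(L)})ᵀ, assumed invertible for all k and all ζ' with P(ζ(x) = ζ') > 0. Then for every φ ∈ ℝ^{n_L}: P( f(x) < φ componentwise ) = Σ_{ζ' : P(ζ(x) = ζ') > 0} Σ_{k=1}^K α_k · N(μ̃_{k,ζ'}, Σ̃_{k,ζ'})( { (u, w) ∈ ℝ^N × ℝ^{n_L} : u ∈ O(ζ') and w < φ componentwise } ), a sum of Gaussian orthant probabilities. -/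

import Mathlib

open Matrix MeasureTheory ProbabilityTheory

theorem measurable_mulVec'' {ι κ : Type*} [Fintype ι] [Fintype κ] (A : Matrix κ ι ℝ) :
    Measurable fun x : ι → ℝ => A *ᵥ x :=
  measurable_pi_lambda _ fun i => Finset.measurable_sum _ fun j _ =>
    (measurable_pi_apply (X := fun _ : ι => ℝ) j).const_mul (A i j)

theorem lintegral_fin_nat_prod_eq_prod' {n : ℕ} {E : Fin n → Type*}
    [∀ i, MeasurableSpace (E i)] (μ : ∀ i, Measure (E i)) [∀ i, SigmaFinite (μ i)]
    (f : (i : Fin n) → E i → ENNReal) (hf : ∀ i, Measurable (f i)) :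
    ∫⁻ x : (i : Fin n) → E i, ∏ i, f i (x i) ∂(Measure.pi μ) = ∏ i, ∫⁻ x, f i x ∂(μ i) := by
  induction n with
  | zero => simp [Measure.pi_of_empty]
  | succ n ih =>
      calc
        _ = ∫⁻ x : E 0 × ((i : Fin n) → E (Fin.succ i)),
            f 0 x.1 * ∏ i : Fin n, f (Fin.succ i) (x.2 i)
              ∂((μ 0).prod (Measure.pi fun i => μ (Fin.succ i))) := by
          rw [← ((measurePreserving_piFinSuccAbove μ 0).symm).lintegral_comp
            (by fun_prop)]
          congr 1
          ext x
          simp_rw [MeasurableEquiv.piFinSuccAbove_symm_apply, Fin.insertNthEquiv,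
            Fin.prod_univ_succ, Fin.insertNth_zero, Equiv.coe_fn_mk, Fin.cons_succ]
          rfl
        _ = (∫⁻ x, f 0 x ∂(μ 0)) * ∫⁻ x : (i : Fin n) → E (Fin.succ i),
              ∏ i : Fin n, f (Fin.succ i) (x i) ∂(Measure.pi fun i => μ (Fin.succ i)) := by
          exact lintegral_prod_mul (hf 0).aemeasurable
            (Finset.measurable_prod _ fun i _ => (hf _).comp (measurable_pi_apply i)).aemeasurable
        _ = ∏ i, ∫⁻ x, f i x ∂(μ i) := by
          rw [ih (fun i => μ (Fin.succ i)) _ (fun i => hf _), Fin.prod_univ_succ]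

theorem lintegral_pi_prod' {ι : Type*} [Fintype ι] {E : ι → Type*}
    [∀ i, MeasurableSpace (E i)] (μ : ∀ i, Measure (E i)) [∀ i, SigmaFinite (μ i)]
    (f : (i : ι) → E i → ENNReal) (hf : ∀ i, Measurable (f i)) :
    ∫⁻ x : (i : ι) → E i, ∏ i, f i (x i) ∂(Measure.pi μ) = ∏ i, ∫⁻ x, f i x ∂(μ i) := by
  let e := (Fintype.equivFin ι).symm
  have h := (measurePreserving_piCongrLeft μ e).lintegral_comp
    (f := fun x : (i : ι) → E i => ∏ i, f i (x i))
    (Finset.measurable_prod _ fun i _ => (hf i).comp (measurable_pi_apply i))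
  rw [← h, ← e.prod_comp (fun i => ∫⁻ x, f i x ∂(μ i))]
  simp_rw [MeasurableEquiv.coe_piCongrLeft]
  have : ∀ a : (i : Fin (Fintype.card ι)) → E (e i),
      ∏ i, f i ((Equiv.piCongrLeft E e a) i) = ∏ i', f (e i') (a i') := by
    intro a
    rw [← e.prod_comp (fun i => f i ((Equiv.piCongrLeft E e a) i))]
    exact Finset.prod_congr rfl fun i _ => by rw [Equiv.piCongrLeft_apply_apply]
  simp_rw [this]
  exact lintegral_fin_nat_prod_eq_prod' _ _ (fun i => hf _)

theorem pi_withDensity' {ι : Type*} [Fintype ι] {E : ι → Type*}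
    [∀ i, MeasurableSpace (E i)] (μ : ∀ i, Measure (E i)) [∀ i, SigmaFinite (μ i)]
    (f : (i : ι) → E i → ENNReal) (hf : ∀ i, Measurable (f i))
    [∀ i, SigmaFinite ((μ i).withDensity (f i))] :
    Measure.pi (fun i => (μ i).withDensity (f i))
      = (Measure.pi μ).withDensity (fun x => ∏ i, f i (x i)) := by
  refine Measure.pi_eq fun s hs => ?_
  rw [withDensity_apply _ (MeasurableSet.univ_pi hs)]
  have key : ∀ x : (i : ι) → E i, (Set.univ.pi s).indicator (fun x => ∏ i, f i (x i)) x
      = ∏ i, (s i).indicator (f i) (x i) := by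
    intro x
    by_cases hx : x ∈ Set.univ.pi s
    · rw [Set.indicator_of_mem hx]
      exact Finset.prod_congr rfl fun i _ =>
        (Set.indicator_of_mem (hx i (Set.mem_univ i)) _).symm
    · rw [Set.indicator_of_notMem hx]
      have : ∃ i, x i ∉ s i := by
        by_contra h
        push_neg at h
        exact hx fun i _ => h i
      obtain ⟨i, hi⟩ := this
      exact (Finset.prod_eq_zero (Finset.mem_univ i) (Set.indicator_of_notMem hi _)).symm
  rw [← lintegral_indicator (MeasurableSet.univ_pi hs) _]
  simp_rw [key]
  rw [lintegral_pi_prod' μ _ (fun i => (hf i).indicator (hs i))]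
  exact Finset.prod_congr rfl fun i _ => by
    rw [lintegral_indicator (hs i) _, withDensity_apply _ (hs i)]

theorem map_withDensity_of_comp' {α β : Type*} [MeasurableSpace α] [MeasurableSpace β]
    {T : α → β} (hT : Measurable T) (μ : Measure α) (g : β → ENNReal) (hg : Measurable g) :
    Measure.map T (μ.withDensity (g ∘ T)) = (Measure.map T μ).withDensity g := by
  ext s hs
  rw [Measure.map_apply hT hs, withDensity_apply _ (hT hs), withDensity_apply _ hs,
    setLIntegral_map hs hg hT]
  rfl

theorem prod_gaussianPDF_eq' {ι : Type*} [Fintype ι] (t : ι → ℝ) :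
    ∏ i, gaussianPDF 0 1 (t i)
      = ENNReal.ofReal ((Real.sqrt (2 * Real.pi))⁻¹ ^ Fintype.card ι
          * Real.exp (-(∑ i, t i ^ 2) / 2)) := by
  simp_rw [gaussianPDF, gaussianPDFReal]
  rw [← ENNReal.ofReal_prod_of_nonneg (fun i _ => by positivity)]
  congr 1
  rw [Finset.prod_mul_distrib, Finset.prod_const, ← Real.exp_sum]
  simp only [NNReal.coe_one, mul_one, sub_zero, Finset.card_univ]
  congr 1
  rw [← Finset.sum_div, ← Finset.sum_neg_distrib]

theorem sum_sq_mulVec_orth' {ι : Type*} [Fintype ι] [DecidableEq ι] {O : Matrix ι ι ℝ}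
    (hO' : Oᵀ * O = 1) (x : ι → ℝ) : ∑ i, (O *ᵥ x) i ^ 2 = ∑ i, x i ^ 2 := by
  have h1 : x ⬝ᵥ ((Oᵀ * O) *ᵥ x) = x ⬝ᵥ x := by rw [hO', one_mulVec]
  rw [← mulVec_mulVec, dotProduct_mulVec, vecMul_transpose] at h1
  simpa [dotProduct, sq] using h1

theorem map_mulVec_orth' {ι : Type*} [Fintype ι] [DecidableEq ι] (O : Matrix ι ι ℝ)
    (hO : O * Oᵀ = 1) :
    Measure.map (fun x => O *ᵥ x) (Measure.pi fun _ : ι => gaussianReal 0 1)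
      = Measure.pi fun _ : ι => gaussianReal 0 1 := by
  have hO' : Oᵀ * O = 1 := mul_eq_one_comm.mp hO
  have hdet2 : O.det * O.det = 1 := by
    have := congrArg Matrix.det hO
    rwa [Matrix.det_mul, Matrix.det_transpose, Matrix.det_one] at this
  have hdet : O.det ≠ 0 := by
    intro h; rw [h, zero_mul] at hdet2; exact zero_ne_one hdet2
  have habs : |O.det| = 1 := by
    have : |O.det| * |O.det| = 1 := by rw [← abs_mul, hdet2, abs_one]
    nlinarith [abs_nonneg O.det]
  have hvol : Measure.map (fun x => O *ᵥ x) (volume : Measure (ι → ℝ)) = volume := by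
    have h := Real.map_matrix_volume_pi_eq_smul_volume_pi hdet
    have hfun : ⇑(Matrix.toLin' O) = fun x => O *ᵥ x := by
      funext x; exact Matrix.toLin'_apply O x
    rw [hfun] at h
    rw [h, abs_inv, habs, inv_one, ENNReal.ofReal_one, one_smul]
  have hSF : SigmaFinite ((volume : Measure ℝ).withDensity (gaussianPDF 0 1)) := by
    rw [← gaussianReal_of_var_ne_zero 0 one_ne_zero]
    infer_instance
  have hSF' : ∀ _i : ι, SigmaFinite (((fun _ : ι => (volume : Measure ℝ)) _i).withDensity
      ((fun _ : ι => gaussianPDF 0 1) _i)) := fun _ => hSF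
  have hstd : (Measure.pi fun _ : ι => gaussianReal 0 1)
      = (volume : Measure (ι → ℝ)).withDensity (fun x => ∏ i, gaussianPDF 0 1 (x i)) := by
    have := @pi_withDensity' ι _ (fun _ => ℝ) _ (fun _ : ι => (volume : Measure ℝ)) _
      (fun _ => gaussianPDF 0 1) (fun _ => measurable_gaussianPDF 0 1) hSF'
    rw [← volume_pi] at this
    rw [← this]
    exact congrArg Measure.pi (funext fun i => gaussianReal_of_var_ne_zero 0 one_ne_zero)
  have hg : Measurable fun x : ι → ℝ => ∏ i, gaussianPDF 0 1 (x i) :=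
    Finset.measurable_prod _ fun i _ =>
      (measurable_gaussianPDF 0 1).comp (measurable_pi_apply i)
  have hcomp : (fun x : ι → ℝ => ∏ i, gaussianPDF 0 1 (x i)) ∘ (fun x => O *ᵥ x)
      = fun x => ∏ i, gaussianPDF 0 1 (x i) := by
    funext x
    simp only [Function.comp_apply]
    rw [prod_gaussianPDF_eq', prod_gaussianPDF_eq', sum_sq_mulVec_orth' hO']
  rw [hstd]
  calc Measure.map (fun x => O *ᵥ x) (volume.withDensity fun x => ∏ i, gaussianPDF 0 1 (x i))
      = Measure.map (fun x => O *ᵥ x) (volume.withDensity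
          ((fun x : ι → ℝ => ∏ i, gaussianPDF 0 1 (x i)) ∘ (fun x => O *ᵥ x))) := by rw [hcomp]
    _ = (Measure.map (fun x => O *ᵥ x) volume).withDensity
          (fun x => ∏ i, gaussianPDF 0 1 (x i)) :=
        map_withDensity_of_comp' (measurable_mulVec'' O) _ _ hg
    _ = volume.withDensity (fun x => ∏ i, gaussianPDF 0 1 (x i)) := by rw [hvol]

theorem map_mulVec_rows_orth' {p m : Type*} [Fintype p] [DecidableEq p]
    [Fintype m] [DecidableEq m] (Q : Matrix p m ℝ) (hQ : Q * Qᵀ = 1) :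
    Measure.map (fun x => Q *ᵥ x) (Measure.pi fun _ : m => gaussianReal 0 1)
      = Measure.pi fun _ : p => gaussianReal 0 1 := by
  classical
  set v : p → EuclideanSpace ℝ m := fun i => (WithLp.equiv 2 (m → ℝ)).symm (Q i) with hv
  have hvQ : ∀ i j, v i j = Q i j := fun i j => rfl
  have hinner : ∀ (x y : EuclideanSpace ℝ m), (inner ℝ x y : ℝ) = ∑ j, x j * y j := by
    intro x y
    simp [PiLp.inner_apply, RCLike.inner_apply, mul_comm]
  have honv : Orthonormal ℝ v := by
    rw [orthonormal_iff_ite]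
    intro i j
    rw [hinner]
    have h := congrFun (congrFun hQ i) j
    simp only [Matrix.mul_apply, Matrix.transpose_apply, Matrix.one_apply] at h
    simpa [hvQ] using h
  have hcard : Fintype.card p ≤ Fintype.card m := by
    have h1 := honv.linearIndependent.fintype_card_le_finrank
    rwa [finrank_euclideanSpace] at h1
  set k := Fintype.card m - Fintype.card p with hk
  have card_eq : Module.finrank ℝ (EuclideanSpace ℝ m) = Fintype.card (p ⊕ Fin k) := by
    rw [finrank_euclideanSpace]
    simp [hk, Nat.add_sub_cancel' hcard]
  set v' : p ⊕ Fin k → EuclideanSpace ℝ m := Sum.elim v 0 with hv'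
  have hres : Orthonormal ℝ ((Set.range (Sum.inl : p → p ⊕ Fin k)).restrict v') := by
    rw [orthonormal_iff_ite]
    rintro ⟨a, i, rfl⟩ ⟨b, j, rfl⟩
    have := (orthonormal_iff_ite.mp honv) i j
    simpa [Set.restrict, hv', Subtype.ext_iff] using this
  obtain ⟨bB, hbB⟩ := hres.exists_orthonormalBasis_extension_of_card_eq card_eq
  have hb_inl : ∀ i, bB (Sum.inl i) = v i := fun i => hbB (Sum.inl i) ⟨i, rfl⟩
  set O : Matrix (p ⊕ Fin k) m ℝ := fun a j => bB a j with hO'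
  have hOrow : O * Oᵀ = 1 := by
    ext a c
    have := (orthonormal_iff_ite.mp bB.orthonormal) a c
    rw [hinner] at this
    rw [Matrix.mul_apply]
    simp only [Matrix.transpose_apply]
    simpa [Matrix.mul_apply, Matrix.one_apply, hO'] using this
  have cardeq' : Fintype.card (p ⊕ Fin k) = Fintype.card m := by
    rw [← card_eq, finrank_euclideanSpace]
  set e : (p ⊕ Fin k) ≃ m := Fintype.equivOfCardEq cardeq' with he
  set O' : Matrix m m ℝ := O.submatrix e.symm id with hO'def
  have hO'orth : O' * O'ᵀ = 1 := by
    rw [hO'def, Matrix.transpose_submatrix]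
    have : O.submatrix (⇑e.symm) (id : m → m) * Oᵀ.submatrix (id : m → m) ⇑e.symm
        = O.submatrix (⇑e.symm) ⇑(Equiv.refl m) * Oᵀ.submatrix (⇑(Equiv.refl m)) ⇑e.symm := rfl
    rw [this, Matrix.submatrix_mul_equiv, hOrow, Matrix.submatrix_one_equiv]
  have hmain : (fun x : m → ℝ => Q *ᵥ x)
      = (fun u : (p ⊕ Fin k) → ℝ => u ∘ Sum.inl)
        ∘ (fun u : m → ℝ => u ∘ e) ∘ (fun x : m → ℝ => O' *ᵥ x) := by
    funext x
    funext i
    simp only [Function.comp_apply, hO'def, Matrix.mulVec, dotProduct,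
      Matrix.submatrix_apply, Equiv.symm_apply_apply, id_eq, hO']
    exact Finset.sum_congr rfl fun j _ => by
      show _ = (bB (e.symm (e (Sum.inl i)))).ofLp j * x j
      rw [Equiv.symm_apply_apply, hb_inl, hvQ]
  have h3 : Measurable fun u : (p ⊕ Fin k) → ℝ => u ∘ Sum.inl :=
    measurable_pi_lambda _ fun i => measurable_pi_apply _
  have h2 : Measurable fun u : m → ℝ => u ∘ e :=
    measurable_pi_lambda _ fun i => measurable_pi_apply _
  have hf2 : Measure.map (fun u : m → ℝ => u ∘ e) (Measure.pi fun _ : m => gaussianReal 0 1)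
      = Measure.pi fun _ : p ⊕ Fin k => gaussianReal 0 1 := by
    have hp := measurePreserving_piCongrLeft (fun _ : p ⊕ Fin k => gaussianReal 0 1) e.symm
    have hfn : ⇑(MeasurableEquiv.piCongrLeft (fun _ : p ⊕ Fin k => ℝ) e.symm)
        = fun u : m → ℝ => u ∘ e := by
      funext u
      funext i
      rw [MeasurableEquiv.coe_piCongrLeft]
      conv_lhs => rw [← e.symm_apply_apply i]
      rw [Equiv.piCongrLeft_apply_apply]
      rfl
    rw [← hfn]
    exact hp.map_eq
  have hf3 : Measure.map (fun u : (p ⊕ Fin k) → ℝ => u ∘ Sum.inl)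
      (Measure.pi fun _ : p ⊕ Fin k => gaussianReal 0 1)
      = Measure.pi fun _ : p => gaussianReal 0 1 := by
    have hsp := measurePreserving_sumPiEquivProdPi
      (fun _ : p ⊕ Fin k => (gaussianReal 0 1 : Measure ℝ))
    have hfn : (fun u : (p ⊕ Fin k) → ℝ => u ∘ Sum.inl)
        = Prod.fst ∘ ⇑(MeasurableEquiv.sumPiEquivProdPi fun _ : p ⊕ Fin k => ℝ) := rfl
    rw [hfn, ← Measure.map_map measurable_fst (MeasurableEquiv.measurable _), hsp.map_eq,
      Measure.map_fst_prod]
    simp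
  rw [hmain, ← Measure.map_map h3 (h2.comp (measurable_mulVec'' O')),
    ← Measure.map_map h2 (measurable_mulVec'' O'), map_mulVec_orth' O' hO'orth, hf2, hf3]

namespace ReluPaper

variable {n : ℕ → ℕ}

/-- Hidden representations of the ReLU network: `hid W b x ℓ` is the paper's
`h_{ℓ+1}(x)`, so that for a network with `L = M + 1` layers the output is
`f(x) = h_L(x) = hid W b x M`. -/
noncomputable def hid (W : ∀ ℓ : ℕ, Matrix (Fin (n (ℓ + 1))) (Fin (n ℓ)) ℝ)
    (b : ∀ ℓ : ℕ, Fin (n (ℓ + 1)) → ℝ) (x : Fin (n 0) → ℝ) :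
    ∀ ℓ : ℕ, Fin (n (ℓ + 1)) → ℝ
  | 0 => W 0 *ᵥ x + b 0
  | ℓ + 1 => W (ℓ + 1) *ᵥ (fun i => max 0 (hid W b x ℓ i)) + b (ℓ + 1)

/-- The matrices `C_ℓ` of the paper (0-indexed: `Cmat W z ℓ` is the paper's `C_{ℓ+1}`),
built from an activation pattern `z` via `C₁ = W₁`, `C_ℓ = W_ℓ diag(z_{ℓ-1}) C_{ℓ-1}`. -/
noncomputable def Cmat (W : ∀ ℓ : ℕ, Matrix (Fin (n (ℓ + 1))) (Fin (n ℓ)) ℝ)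
    (z : ∀ ℓ : ℕ, Fin (n (ℓ + 1)) → ℝ) :
    ∀ ℓ : ℕ, Matrix (Fin (n (ℓ + 1))) (Fin (n 0)) ℝ
  | 0 => W 0
  | ℓ + 1 => W (ℓ + 1) * Matrix.diagonal (z ℓ) * Cmat W z ℓ

/-- The vectors `d_ℓ` of the paper (0-indexed: `dvec W b z ℓ` is the paper's `d_{ℓ+1}`),
via `d₁ = b₁`, `d_ℓ = W_ℓ diag(z_{ℓ-1}) d_{ℓ-1} + b_ℓ`. -/
noncomputable def dvec (W : ∀ ℓ : ℕ, Matrix (Fin (n (ℓ + 1))) (Fin (n ℓ)) ℝ)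
    (b : ∀ ℓ : ℕ, Fin (n (ℓ + 1)) → ℝ) (z : ∀ ℓ : ℕ, Fin (n (ℓ + 1)) → ℝ) :
    ∀ ℓ : ℕ, Fin (n (ℓ + 1)) → ℝ
  | 0 => b 0
  | ℓ + 1 => W (ℓ + 1) *ᵥ (Matrix.diagonal (z ℓ) *ᵥ dvec W b z ℓ) + b (ℓ + 1)

/-- `x` induces activation pattern `z`, i.e. `𝟙(h_ℓ) = z_ℓ` for every hidden layer
`ℓ = 1, …, L - 1` of a network with `L = M + 1` layers. -/
def inducesPattern (M : ℕ) (W : ∀ ℓ : ℕ, Matrix (Fin (n (ℓ + 1))) (Fin (n ℓ)) ℝ)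
    (b : ∀ ℓ : ℕ, Fin (n (ℓ + 1)) → ℝ) (x : Fin (n 0) → ℝ)
    (z : ∀ ℓ : ℕ, Fin (n (ℓ + 1)) → ℝ) : Prop :=
  ∀ ℓ < M, ∀ i, (if 0 < hid W b x ℓ i then (1 : ℝ) else 0) = z ℓ i

/-- Index set for the stacked vector `[h₁ᵀ, …, h_{L-1}ᵀ]ᵀ` (with `L = M + 1`):
a hidden layer index together with a neuron index in that layer. -/
abbrev PatIdx (M : ℕ) (n : ℕ → ℕ) := (ℓ : Fin M) × Fin (n (ℓ.1 + 1))

/-- The `{0,1}`-valued activation pattern associated with a boolean vector on the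
stacked index set. -/
def zOf {M : ℕ} (s : PatIdx M n → Bool) : ∀ ℓ : ℕ, Fin (n (ℓ + 1)) → ℝ :=
  fun ℓ i => if h : ℓ < M then (if s ⟨⟨ℓ, h⟩, i⟩ then 1 else 0) else 0

/-- The multivariate (possibly degenerate) Gaussian distribution `N(m, S)` on `ι → ℝ`:
the pushforward of a standard Gaussian under the affine map `x ↦ m + √S x`
(with junk value `0` if `S` is not positive semidefinite, a case never used below). -/
noncomputable def mvGaussian {ι : Type*} [Fintype ι] [DecidableEq ι]
    (m : ι → ℝ) (S : Matrix ι ι ℝ) : Measure (ι → ℝ) :=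
  letI := Classical.propDecidable S.PosSemidef
  if hS : S.PosSemidef then
    Measure.map (fun x => m + (hS.1.eigenvectorUnitary.1 * Matrix.diagonal ((Real.sqrt ·) ∘ hS.1.eigenvalues) *
      (star hS.1.eigenvectorUnitary : Matrix ι ι ℝ)) *ᵥ x) (Measure.pi fun _ : ι => gaussianReal 0 1)
  else 0

noncomputable def psdSqrt' {ι : Type*} [Fintype ι] [DecidableEq ι] {S : Matrix ι ι ℝ}
    (hS : S.PosSemidef) : Matrix ι ι ℝ :=
  hS.1.eigenvectorUnitary.1 * Matrix.diagonal ((Real.sqrt ·) ∘ hS.1.eigenvalues) *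
    (star hS.1.eigenvectorUnitary : Matrix ι ι ℝ)

theorem psdSqrt'_transpose {ι : Type*} [Fintype ι] [DecidableEq ι] {S : Matrix ι ι ℝ}
    (hS : S.PosSemidef) : (psdSqrt' hS)ᵀ = psdSqrt' hS := by
  rw [← Matrix.conjTranspose_eq_transpose_of_trivial, psdSqrt']
  simp [Matrix.mul_assoc, Matrix.star_eq_conjTranspose]

theorem psdSqrt'_mul_self {ι : Type*} [Fintype ι] [DecidableEq ι] {S : Matrix ι ι ℝ}
    (hS : S.PosSemidef) : psdSqrt' hS * psdSqrt' hS = S := by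
  have hU : (star hS.1.eigenvectorUnitary : Matrix ι ι ℝ) * hS.1.eigenvectorUnitary.1 = 1 :=
    Unitary.coe_star_mul_self _
  have hD : Matrix.diagonal ((Real.sqrt ·) ∘ hS.1.eigenvalues)
      * Matrix.diagonal ((Real.sqrt ·) ∘ hS.1.eigenvalues)
      = Matrix.diagonal (RCLike.ofReal ∘ hS.1.eigenvalues) := by
    rw [Matrix.diagonal_mul_diagonal]
    congr 1
    funext i
    simp [Real.mul_self_sqrt (hS.eigenvalues_nonneg i)]
  conv_rhs => rw [hS.1.spectral_theorem, Unitary.conjStarAlgAut_apply]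
  rw [psdSqrt']
  calc _ = hS.1.eigenvectorUnitary.1 * Matrix.diagonal ((Real.sqrt ·) ∘ hS.1.eigenvalues) *
        ((star hS.1.eigenvectorUnitary : Matrix ι ι ℝ) * hS.1.eigenvectorUnitary.1) *
        Matrix.diagonal ((Real.sqrt ·) ∘ hS.1.eigenvalues) *
        (star hS.1.eigenvectorUnitary : Matrix ι ι ℝ) := by simp only [Matrix.mul_assoc]
    _ = _ := by rw [hU, Matrix.mul_one, Matrix.mul_assoc hS.1.eigenvectorUnitary.1 (Matrix.diagonal _) (Matrix.diagonal _), hD]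

theorem map_affine_gauss' {p m : Type*} [Fintype p] [DecidableEq p] [Fintype m] [DecidableEq m]
    (A : Matrix p m ℝ) (c : p → ℝ) (hU : IsUnit (A * Aᵀ)) :
    Measure.map (fun x => c + A *ᵥ x) (Measure.pi fun _ : m => gaussianReal 0 1)
      = mvGaussian c (A * Aᵀ) := by
  classical
  have hS : (A * Aᵀ).PosSemidef := by
    have := Matrix.posSemidef_self_mul_conjTranspose A
    rwa [Matrix.conjTranspose_eq_transpose_of_trivial] at this
  set B := psdSqrt' hS with hB
  have hBsymm : Bᵀ = B := psdSqrt'_transpose hS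
  have hBB : B * B = A * Aᵀ := psdSqrt'_mul_self hS
  have hdetB : IsUnit B.det := by
    have h1 : IsUnit (A * Aᵀ).det := (Matrix.isUnit_iff_isUnit_det _).mp hU
    rw [← hBB, Matrix.det_mul] at h1
    exact isUnit_of_mul_isUnit_left h1
  have hQ : (B⁻¹ * A) * (B⁻¹ * A)ᵀ = 1 := by
    rw [Matrix.transpose_mul, Matrix.transpose_nonsing_inv, hBsymm]
    calc B⁻¹ * A * (Aᵀ * B⁻¹) = B⁻¹ * (A * Aᵀ) * B⁻¹ := by
          simp only [Matrix.mul_assoc]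
      _ = B⁻¹ * (B * B) * B⁻¹ := by rw [hBB]
      _ = (B⁻¹ * B) * (B * B⁻¹) := by simp only [Matrix.mul_assoc]
      _ = 1 := by rw [Matrix.nonsing_inv_mul _ hdetB, Matrix.mul_nonsing_inv _ hdetB, one_mul]
  have hA : A = B * (B⁻¹ * A) := by
    rw [← Matrix.mul_assoc, Matrix.mul_nonsing_inv _ hdetB, Matrix.one_mul]
  have hcomp : (fun x : m → ℝ => c + A *ᵥ x)
      = (fun y : p → ℝ => c + B *ᵥ y) ∘ (fun x : m → ℝ => (B⁻¹ * A) *ᵥ x) := by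
    funext x
    simp only [Function.comp_apply, Matrix.mulVec_mulVec]
    rw [← hA]
  rw [hcomp, ← Measure.map_map ((measurable_mulVec'' B).const_add c)
    (measurable_mulVec'' _), map_mulVec_rows_orth' _ hQ]
  rw [mvGaussian, dif_pos hS]
  rfl

theorem mvGaussian_comp' {p m : Type*} [Fintype p] [DecidableEq p] [Fintype m] [DecidableEq m]
    (μ0 : m → ℝ) (S : Matrix m m ℝ) (hS : S.PosDef) (C : Matrix p m ℝ) (d : p → ℝ)
    (hU : IsUnit (C * S * Cᵀ)) (B : Set (p → ℝ)) (hB : MeasurableSet B) :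
    mvGaussian μ0 S ((fun x => C *ᵥ x + d) ⁻¹' B) = mvGaussian (C *ᵥ μ0 + d) (C * S * Cᵀ) B := by
  classical
  have hpsd : S.PosSemidef := hS.posSemidef
  have hsqrt : psdSqrt' hpsd * psdSqrt' hpsd = S := psdSqrt'_mul_self hpsd
  have hsymm : (psdSqrt' hpsd)ᵀ = psdSqrt' hpsd := psdSqrt'_transpose hpsd
  have hAAT : (C * psdSqrt' hpsd) * (C * psdSqrt' hpsd)ᵀ = C * S * Cᵀ := by
    rw [Matrix.transpose_mul, hsymm]
    calc C * psdSqrt' hpsd * (psdSqrt' hpsd * Cᵀ) = C * (psdSqrt' hpsd * psdSqrt' hpsd) * Cᵀ := by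
          simp only [Matrix.mul_assoc]
      _ = C * S * Cᵀ := by rw [hsqrt]
  have hg : Measurable fun x : m → ℝ => C *ᵥ x + d := (measurable_mulVec'' C).add_const d
  have haff : Measurable fun x : m → ℝ => μ0 + psdSqrt' hpsd *ᵥ x :=
    (measurable_mulVec'' _).const_add μ0
  have h1 : mvGaussian μ0 S = Measure.map (fun x => μ0 + psdSqrt' hpsd *ᵥ x)
      (Measure.pi fun _ : m => gaussianReal 0 1) := by rw [mvGaussian, dif_pos hpsd]; rfl
  rw [h1, Measure.map_apply haff (hg hB), ← Set.preimage_comp,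
    ← Measure.map_apply (hg.comp haff) hB]
  have hcomp : (fun x : m → ℝ => C *ᵥ x + d) ∘ (fun x => μ0 + psdSqrt' hpsd *ᵥ x)
      = fun x => (C *ᵥ μ0 + d) + (C * psdSqrt' hpsd) *ᵥ x := by
    funext x
    simp only [Function.comp_apply, Matrix.mulVec_add, ← Matrix.mulVec_mulVec]
    abel
  have hU' : IsUnit ((C * psdSqrt' hpsd) * (C * psdSqrt' hpsd)ᵀ) := by rw [hAAT]; exact hU
  rw [hcomp, map_affine_gauss' (C * psdSqrt' hpsd) (C *ᵥ μ0 + d) hU', hAAT]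

theorem hid_eq_affine (W : ∀ ℓ : ℕ, Matrix (Fin (n (ℓ + 1))) (Fin (n ℓ)) ℝ)
    (b : ∀ ℓ : ℕ, Fin (n (ℓ + 1)) → ℝ) (x : Fin (n 0) → ℝ)
    (z : ∀ ℓ : ℕ, Fin (n (ℓ + 1)) → ℝ) :
    ∀ ℓ : ℕ, (∀ ℓ' < ℓ, ∀ i, (if 0 < hid W b x ℓ' i then (1 : ℝ) else 0) = z ℓ' i) →
      hid W b x ℓ = Cmat W z ℓ *ᵥ x + dvec W b z ℓ
  | 0, _ => rfl
  | ℓ + 1, h => by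
      have ih := hid_eq_affine W b x z ℓ (fun ℓ' hℓ' => h ℓ' (Nat.lt_succ_of_lt hℓ'))
      have hrelu : (fun i => max 0 (hid W b x ℓ i)) = Matrix.diagonal (z ℓ) *ᵥ hid W b x ℓ := by
        funext i
        rw [Matrix.mulVec_diagonal]
        have hz := h ℓ (Nat.lt_succ_self ℓ) i
        by_cases hp : 0 < hid W b x ℓ i
        · rw [if_pos hp] at hz
          rw [← hz, one_mul, max_eq_right hp.le]
        · rw [if_neg hp] at hz
          rw [← hz, zero_mul, max_eq_left (le_of_not_gt hp)]
      show W (ℓ + 1) *ᵥ (fun i => max 0 (hid W b x ℓ i)) + b (ℓ + 1)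
          = Cmat W z (ℓ + 1) *ᵥ x + dvec W b z (ℓ + 1)
      rw [hrelu, ih]
      show W (ℓ + 1) *ᵥ (Matrix.diagonal (z ℓ) *ᵥ (Cmat W z ℓ *ᵥ x + dvec W b z ℓ)) + b (ℓ + 1)
          = (W (ℓ + 1) * Matrix.diagonal (z ℓ) * Cmat W z ℓ) *ᵥ x
            + (W (ℓ + 1) *ᵥ (Matrix.diagonal (z ℓ) *ᵥ dvec W b z ℓ) + b (ℓ + 1))
      rw [Matrix.mulVec_add, Matrix.mulVec_add, Matrix.mulVec_mulVec, Matrix.mulVec_mulVec]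
      exact add_assoc _ _ _

theorem measurable_hid (W : ∀ ℓ : ℕ, Matrix (Fin (n (ℓ + 1))) (Fin (n ℓ)) ℝ)
    (b : ∀ ℓ : ℕ, Fin (n (ℓ + 1)) → ℝ) :
    ∀ ℓ : ℕ, Measurable fun x : Fin (n 0) → ℝ => hid W b x ℓ
  | 0 => by
      have : (fun x : Fin (n 0) → ℝ => hid W b x 0) = fun x => W 0 *ᵥ x + b 0 := rfl
      rw [this]
      exact (measurable_mulVec'' (W 0)).add_const (b 0)
  | ℓ + 1 => by
      have ih := measurable_hid W b ℓ
      have hrelu : Measurable fun v : Fin (n (ℓ + 1)) → ℝ => (fun i => max 0 (v i)) :=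
        measurable_pi_lambda _ fun i => measurable_const.max (measurable_pi_apply i)
      have hmv : Measurable fun v : Fin (n (ℓ + 1)) → ℝ => W (ℓ + 1) *ᵥ v + b (ℓ + 1) :=
        (measurable_mulVec'' (W (ℓ + 1))).add_const (b (ℓ + 1))
      have : (fun x : Fin (n 0) → ℝ => hid W b x (ℓ + 1))
          = (fun v => W (ℓ + 1) *ᵥ v + b (ℓ + 1))
            ∘ (fun v : Fin (n (ℓ+1)) → ℝ => fun i => max 0 (v i))
            ∘ (fun x => hid W b x ℓ) := rfl
      rw [this]
      exact hmv.comp (hrelu.comp ih)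

theorem measurableSet_indicator_level (c : ℝ) :
    MeasurableSet {t : ℝ | (if 0 < t then (1 : ℝ) else 0) = c} := by
  rcases eq_or_ne c 1 with rfl | h1
  · have : {t : ℝ | (if 0 < t then (1 : ℝ) else 0) = 1} = Set.Ioi 0 := by
      ext t
      by_cases ht : 0 < t <;> simp [ht]
    rw [this]; exact measurableSet_Ioi
  rcases eq_or_ne c 0 with rfl | h0
  · have : {t : ℝ | (if 0 < t then (1 : ℝ) else 0) = 0} = Set.Iic 0 := by
      ext t
      by_cases ht : 0 < t
      · simp [ht, not_le.mpr ht]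
      · simp [ht, le_of_not_gt ht]
    rw [this]; exact measurableSet_Iic
  · have : {t : ℝ | (if 0 < t then (1 : ℝ) else 0) = c} = ∅ := by
      ext t
      by_cases ht : 0 < t <;> simp [ht]
      · exact fun h => h1 h.symm
      · exact fun h => h0 h.symm
    rw [this]; exact MeasurableSet.empty

open Classical

/-- Proposition 3, CDF form: `P(f(x) < φ)` is the sum, over activation
patterns with positive probability and mixture components, of Gaussian probabilities of
`{(u, w) : u ∈ O(ζ'), w < φ}` with parameters built from `C̄^{(L)}, d̄^{(L)}`. -/
theorem statement12
    (n : ℕ → ℕ) (M : ℕ)  -- the network has `L = M + 1` layers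
    (W : ∀ ℓ : ℕ, Matrix (Fin (n (ℓ + 1))) (Fin (n ℓ)) ℝ)
    (b : ∀ ℓ : ℕ, Fin (n (ℓ + 1)) → ℝ)
    (Kc : ℕ) (α : Fin Kc → ℝ) (hα : ∀ k, 0 < α k) (hαsum : ∑ k, α k = 1)
    (μmix : Fin Kc → Fin (n 0) → ℝ) (Smix : Fin Kc → Matrix (Fin (n 0)) (Fin (n 0)) ℝ)
    (hSpd : ∀ k, (Smix k).PosDef)
    {Ω : Type*} [MeasurableSpace Ω] (P : Measure Ω) [IsProbabilityMeasure P]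
    (X : Ω → Fin (n 0) → ℝ) (hX : Measurable X)
    -- the input has Gaussian-mixture law `μ = ∑ k, α k • N(μ_k, Σ_k)`
    (hlaw : P.map X = ∑ k, ENNReal.ofReal (α k) • mvGaussian (μmix k) (Smix k))
    -- the stacked matrices `C̄^{(L)}` and vectors `d̄^{(L)}` for each pattern
    (Cbar : (PatIdx M n → Bool) → Matrix (PatIdx M n ⊕ Fin (n (M + 1))) (Fin (n 0)) ℝ)
    (hCbar₁ : ∀ s (p : PatIdx M n) (j : Fin (n 0)),
      Cbar s (Sum.inl p) j = Cmat W (zOf s) (p.1 : ℕ) p.2 j)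
    (hCbar₂ : ∀ s (i : Fin (n (M + 1))) (j : Fin (n 0)),
      Cbar s (Sum.inr i) j = Cmat W (zOf s) M i j)
    (dbar : (PatIdx M n → Bool) → PatIdx M n ⊕ Fin (n (M + 1)) → ℝ)
    (hdbar₁ : ∀ s (p : PatIdx M n), dbar s (Sum.inl p) = dvec W b (zOf s) (p.1 : ℕ) p.2)
    (hdbar₂ : ∀ s (i : Fin (n (M + 1))), dbar s (Sum.inr i) = dvec W b (zOf s) M i)
    -- `Σ̃_{k,ζ'}` is invertible for all `k` and all patterns of positive probability
    (hinv : ∀ s, 0 < P {ω | inducesPattern M W b (X ω) (zOf s)} →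
      ∀ k, IsUnit (Cbar s * Smix k * (Cbar s)ᵀ))
    (φ : Fin (n (M + 1)) → ℝ) :
    P {ω | ∀ j, hid W b (X ω) M j < φ j} =
      ∑ s ∈ Finset.univ.filter
          (fun s : PatIdx M n → Bool => 0 < P {ω | inducesPattern M W b (X ω) (zOf s)}),
        ∑ k, ENNReal.ofReal (α k) *
          mvGaussian (Cbar s *ᵥ μmix k + dbar s) (Cbar s * Smix k * (Cbar s)ᵀ)
            {v : PatIdx M n ⊕ Fin (n (M + 1)) → ℝ |
              (∀ p : PatIdx M n,
                (if 0 < v (Sum.inl p) then (1 : ℝ) else 0) = zOf s (p.1 : ℕ) p.2) ∧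
              (∀ j, v (Sum.inr j) < φ j)} := by
  classical
  set Bs : (PatIdx M n → Bool) → Set ((PatIdx M n ⊕ Fin (n (M + 1))) → ℝ) :=
    fun s => {v | (∀ p : PatIdx M n,
        (if 0 < v (Sum.inl p) then (1 : ℝ) else 0) = zOf s (p.1 : ℕ) p.2) ∧
      (∀ j, v (Sum.inr j) < φ j)} with hBsdef
  have hBmeas : ∀ s, MeasurableSet (Bs s) := by
    intro s
    have hset : Bs s = (⋂ p : PatIdx M n,
          (fun v : (PatIdx M n ⊕ Fin (n (M + 1))) → ℝ => v (Sum.inl p)) ⁻¹'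
            {t : ℝ | (if 0 < t then (1 : ℝ) else 0) = zOf s (p.1 : ℕ) p.2})
        ∩ (⋂ j, (fun v : (PatIdx M n ⊕ Fin (n (M + 1))) → ℝ => v (Sum.inr j)) ⁻¹'
            Set.Iio (φ j)) := by
      ext v
      simp [hBsdef, Set.mem_iInter]
    rw [hset]
    exact MeasurableSet.inter
      (MeasurableSet.iInter fun p =>
        (measurable_pi_apply (Sum.inl p)) (measurableSet_indicator_level _))
      (MeasurableSet.iInter fun j => (measurable_pi_apply (Sum.inr j)) measurableSet_Iio)
  have hvinl : ∀ s (x : Fin (n 0) → ℝ) (p : PatIdx M n),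
      (Cbar s *ᵥ x + dbar s) (Sum.inl p)
        = (Cmat W (zOf s) (p.1 : ℕ) *ᵥ x) p.2 + dvec W b (zOf s) (p.1 : ℕ) p.2 := by
    intro s x p
    simp only [Pi.add_apply, Matrix.mulVec, dotProduct, hdbar₁]
    congr 1
    exact Finset.sum_congr rfl fun j _ => by rw [hCbar₁]
  have hvinr : ∀ s (x : Fin (n 0) → ℝ) (j : Fin (n (M + 1))),
      (Cbar s *ᵥ x + dbar s) (Sum.inr j)
        = (Cmat W (zOf s) M *ᵥ x) j + dvec W b (zOf s) M j := by
    intro s x j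
    simp only [Pi.add_apply, Matrix.mulVec, dotProduct, hdbar₂]
    congr 1
    exact Finset.sum_congr rfl fun j' _ => by rw [hCbar₂]
  have hsetx : ∀ s, {x : Fin (n 0) → ℝ | inducesPattern M W b x (zOf s)
        ∧ ∀ j, hid W b x M j < φ j}
      = (fun x => Cbar s *ᵥ x + dbar s) ⁻¹' Bs s := by
    intro s
    ext x
    simp only [Set.mem_setOf_eq, Set.mem_preimage, hBsdef]
    constructor
    · rintro ⟨hpat, hout⟩
      constructor
      · intro p
        rw [hvinl]
        have haff := hid_eq_affine W b x (zOf s) (p.1 : ℕ)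
          (fun ℓ' hℓ' _ => hpat ℓ' (lt_trans hℓ' p.1.isLt) _)
        have hco := congrFun haff p.2
        rw [Pi.add_apply] at hco
        rw [← hco]
        exact hpat (p.1 : ℕ) p.1.isLt p.2
      · intro j
        rw [hvinr]
        have haff := hid_eq_affine W b x (zOf s) M hpat
        have hco := congrFun haff j
        rw [Pi.add_apply] at hco
        rw [← hco]
        exact hout j
    · rintro ⟨h1, h2⟩
      have key : ∀ ℓ, ℓ < M → ∀ i, (if 0 < hid W b x ℓ i then (1 : ℝ) else 0)
          = zOf s ℓ i := by
        intro ℓ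
        induction ℓ using Nat.strong_induction_on with
        | _ ℓ ih =>
          intro hℓ i
          have hpre : ∀ ℓ' < ℓ, ∀ i',
              (if 0 < hid W b x ℓ' i' then (1 : ℝ) else 0) = zOf s ℓ' i' :=
            fun ℓ' hℓ' i' => ih ℓ' hℓ' (lt_trans hℓ' hℓ) i'
          have haff := hid_eq_affine W b x (zOf s) ℓ hpre
          have hb' := h1 ⟨⟨ℓ, hℓ⟩, i⟩
          rw [hvinl] at hb'
          have hco := congrFun haff i
          rw [Pi.add_apply] at hco
          rw [hco]
          exact hb'
      refine ⟨key, ?_⟩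
      intro j
      have haff := hid_eq_affine W b x (zOf s) M key
      have hco := congrFun haff j
      rw [Pi.add_apply] at hco
      rw [hco, ← hvinr]
      exact h2 j
  have hhidmeas : ∀ (ℓ : ℕ) i, Measurable fun x : Fin (n 0) → ℝ => hid W b x ℓ i :=
    fun ℓ i => (measurable_pi_apply i).comp (measurable_hid W b ℓ)
  have hXsetmeas : ∀ s : PatIdx M n → Bool,
      MeasurableSet {x : Fin (n 0) → ℝ | inducesPattern M W b x (zOf s)} := by
    intro s
    have hset : {x : Fin (n 0) → ℝ | inducesPattern M W b x (zOf s)}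
        = ⋂ ℓ, ⋂ (_ : ℓ < M), ⋂ i, (fun x => hid W b x ℓ i) ⁻¹'
            {t : ℝ | (if 0 < t then (1 : ℝ) else 0) = zOf s ℓ i} := by
      ext x
      simp only [Set.mem_setOf_eq, Set.mem_iInter, Set.mem_preimage, inducesPattern]
    rw [hset]
    exact MeasurableSet.iInter fun ℓ => MeasurableSet.iInter fun _ =>
      MeasurableSet.iInter fun i => (hhidmeas ℓ i) (measurableSet_indicator_level _)
  have hPatmeas : ∀ s, MeasurableSet {ω | inducesPattern M W b (X ω) (zOf s)} :=
    fun s => hX (hXsetmeas s)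
  have hEmeas : MeasurableSet {ω | ∀ j, hid W b (X ω) M j < φ j} := by
    have hset : {ω | ∀ j, hid W b (X ω) M j < φ j}
        = X ⁻¹' (⋂ j, (fun x => hid W b x M j) ⁻¹' Set.Iio (φ j)) := by
      ext ω
      simp [Set.mem_iInter]
    rw [hset]
    exact hX (MeasurableSet.iInter fun j => (hhidmeas M j) measurableSet_Iio)
  set E := {ω | ∀ j, hid W b (X ω) M j < φ j} with hEdef
  set Pat := fun s : PatIdx M n → Bool => {ω | inducesPattern M W b (X ω) (zOf s)}
    with hPatdef
  have hcover : E = ⋃ s ∈ (Finset.univ : Finset (PatIdx M n → Bool)), (E ∩ Pat s) := by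
    ext ω
    simp only [Set.mem_iUnion, Finset.mem_univ, Set.mem_inter_iff, exists_prop, true_and]
    constructor
    · intro hω
      refine ⟨fun p => decide (0 < hid W b (X ω) (p.1 : ℕ) p.2), hω, ?_⟩
      intro ℓ hℓ i
      simp only [zOf, dif_pos hℓ]
      by_cases hp : 0 < hid W b (X ω) ℓ i
      · simp [hp]
      · simp [hp]
    · rintro ⟨s, hωE, -⟩
      exact hωE
  have hdisj : (↑(Finset.univ : Finset (PatIdx M n → Bool)) : Set _).PairwiseDisjoint
      (fun s => E ∩ Pat s) := by
    intro s _ t _ hst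
    refine Set.disjoint_left.mpr fun ω hωs hωt => hst ?_
    funext p
    obtain ⟨⟨ℓ, hℓ⟩, i⟩ := p
    have h1 := hωs.2 ℓ hℓ i
    have h2 := hωt.2 ℓ hℓ i
    have heq := h1.symm.trans h2
    simp only [zOf, dif_pos hℓ] at heq
    cases hs' : s ⟨⟨ℓ, hℓ⟩, i⟩ <;> cases ht' : t ⟨⟨ℓ, hℓ⟩, i⟩ <;>
      simp [hs', ht'] at heq ⊢
  have hPE : P E = ∑ s : PatIdx M n → Bool, P (E ∩ Pat s) := by
    conv_lhs => rw [hcover]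
    exact measure_biUnion_finset hdisj (fun s _ => hEmeas.inter (hPatmeas s))
  rw [hPE, ← Finset.sum_filter_add_sum_filter_not Finset.univ
    (fun s => 0 < P (Pat s)) (fun s => P (E ∩ Pat s))]
  have hzero : ∀ s ∈ Finset.univ.filter (fun s : PatIdx M n → Bool => ¬ 0 < P (Pat s)),
      P (E ∩ Pat s) = 0 := by
    intro s hs
    have h0 : P (Pat s) = 0 := le_zero_iff.mp (not_lt.mp (Finset.mem_filter.mp hs).2)
    exact le_antisymm (le_trans (measure_mono Set.inter_subset_right) h0.le) zero_le
  rw [Finset.sum_eq_zero hzero, add_zero]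
  refine Finset.sum_congr rfl fun s hs => ?_
  have hp : 0 < P (Pat s) := (Finset.mem_filter.mp hs).2
  have hsplit : E ∩ Pat s = X ⁻¹' ((fun x => Cbar s *ᵥ x + dbar s) ⁻¹' Bs s) := by
    rw [← hsetx s]
    ext ω
    simp only [Set.mem_inter_iff, Set.mem_preimage, Set.mem_setOf_eq, hEdef, hPatdef]
    exact ⟨fun h => ⟨h.2, h.1⟩, fun h => ⟨h.2, h.1⟩⟩
  rw [hsplit, ← Measure.map_apply hX
    (((measurable_mulVec'' (Cbar s)).add_const (dbar s)) (hBmeas s)), hlaw,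
    Measure.finset_sum_apply]
  refine Finset.sum_congr rfl fun k _ => ?_
  rw [Measure.smul_apply, smul_eq_mul]
  congr 1
  exact mvGaussian_comp' (μmix k) (Smix k) (hSpd k) (Cbar s) (dbar s)
    (hinv s hp k) (Bs s) (hBmeas s)


end ReluPaper
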